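/- Let L(t,x,p) = a(t)p² + b(t,x)p + c(t,x) with a(t) ≠ 0 for t ∈ [a,b], and let z(t,x̃) be a C² transformation. If the expression L(t, z(t,x̃), ∂z/∂t + (∂z/∂x̃)·p̃) - L(t, x̃, p̃) is linear (affine) in p̃ for all (t, x̃, p̃), then (∂z/∂x̃)² = 1, i.e., z(t,x̃) = ±x̃ + f(t) for some function f. -/

import Mathlib

/-- Leitmann's corollary: for `L(t,x,p) = a(t)p² + b(t,x)p + c(t,x)` with
`a(t) ≠ 0`, if the Lagrangian difference under a C² transformation `x = z(t,x̃)`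
is affine in `p̃`, then `(∂z/∂x̃)² = 1`, i.e. `z(t,x̃) = ±x̃ + f(t)`. -/
theorem stmt10 (a b : ℝ) (hab : a < b)
    (aco : ℝ → ℝ) (bco cco : ℝ → ℝ → ℝ)
    (ha : ∀ t ∈ Set.Icc a b, aco t ≠ 0)
    (L : ℝ → ℝ → ℝ → ℝ)
    (hL : ∀ t x p, L t x p = aco t * p ^ 2 + bco t x * p + cco t x)
    (z zt zx : ℝ → ℝ → ℝ)
    (hz2 : ContDiff ℝ 2 (fun q : ℝ × ℝ => z q.1 q.2))
    (hzt : ∀ t x, HasDerivAt (fun τ => z τ x) (zt t x) t)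
    (hzx : ∀ t x, HasDerivAt (fun y => z t y) (zx t x) x)
    (A B : ℝ → ℝ → ℝ)
    (hlin : ∀ t ∈ Set.Icc a b, ∀ x p : ℝ,
        L t (z t x) (zt t x + zx t x * p) - L t x p = A t x + B t x * p) :
    (∀ t ∈ Set.Icc a b, ∀ x : ℝ, (zx t x) ^ 2 = 1) ∧
      ∃ f : ℝ → ℝ,
        (∀ t ∈ Set.Icc a b, ∀ x : ℝ, z t x = x + f t) ∨
        (∀ t ∈ Set.Icc a b, ∀ x : ℝ, z t x = -x + f t) := by
  -- Step 1: (zx t x)^2 = 1 on Icc a b × ℝ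
  have key : ∀ t ∈ Set.Icc a b, ∀ x : ℝ, (zx t x) ^ 2 = 1 := by
    intro t ht x
    have h1 := hlin t ht x 1
    have h2 := hlin t ht x (-1)
    have h0 := hlin t ht x 0
    simp only [hL] at h1 h2 h0
    have hane := ha t ht
    have : aco t * ((zx t x) ^ 2 - 1) = 0 := by nlinarith [h1, h2, h0]
    have := mul_eq_zero.mp this
    rcases this with h | h
    · exact absurd h hane
    · linarith
  refine ⟨key, ?_⟩
  -- continuity of zx
  set Z : ℝ × ℝ → ℝ := fun q => z q.1 q.2 with hZ
  have hdiff : Differentiable ℝ Z := hz2.differentiable (by norm_num)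
  have hzx_eq : ∀ t x : ℝ, zx t x = fderiv ℝ Z (t, x) (0, 1) := by
    intro t x
    have hcomp : HasDerivAt (fun y : ℝ => Z (t, y)) (fderiv ℝ Z (t, x) (0, 1)) x := by
      have h1 : HasFDerivAt Z (fderiv ℝ Z (t, x)) (t, x) := (hdiff (t, x)).hasFDerivAt
      have h2 : HasDerivAt (fun y : ℝ => ((t, y) : ℝ × ℝ)) ((0, 1) : ℝ × ℝ) x := by
        have := ((hasDerivAt_id x).const_mul (1:ℝ))
        exact (hasDerivAt_const x t).prodMk (hasDerivAt_id x)
      exact h1.comp_hasDerivAt x h2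
    exact (hzx t x).unique hcomp
  have hcont : Continuous (fun q : ℝ × ℝ => zx q.1 q.2) := by
    have h1 : Continuous (fun q : ℝ × ℝ => fderiv ℝ Z q (0, 1)) := by
      have := (hz2.continuous_fderiv (by norm_num))
      exact (ContinuousLinearMap.apply ℝ ℝ ((0:ℝ), (1:ℝ))).continuous.comp this
    have : (fun q : ℝ × ℝ => zx q.1 q.2) = fun q : ℝ × ℝ => fderiv ℝ Z q (0, 1) := by
      funext q; exact hzx_eq q.1 q.2
    rw [this]; exact h1
  -- the set S is preconnected
  set S : Set (ℝ × ℝ) := Set.Icc a b ×ˢ (Set.univ : Set ℝ) with hS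
  have hScon : IsPreconnected S :=
    (isPreconnected_Icc).prod isPreconnected_univ
  have hval : ∀ q ∈ S, zx q.1 q.2 = 1 ∨ zx q.1 q.2 = -1 := by
    intro q hq
    have := key q.1 hq.1 q.2
    have : (zx q.1 q.2 - 1) * (zx q.1 q.2 + 1) = 0 := by ring_nf; nlinarith [this]
    rcases mul_eq_zero.mp this with h | h
    · left; linarith
    · right; linarith
  -- dichotomy: zx is constantly 1 or constantly -1 on S
  have hdico : (∀ q ∈ S, zx q.1 q.2 = 1) ∨ (∀ q ∈ S, zx q.1 q.2 = -1) := by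
    by_contra hcon
    push_neg at hcon
    obtain ⟨⟨q1, hq1, hq1v⟩, ⟨q2, hq2, hq2v⟩⟩ := hcon
    have h1 : zx q1.1 q1.2 = -1 := (hval q1 hq1).resolve_left hq1v
    have h2 : zx q2.1 q2.2 = 1 := (hval q2 hq2).resolve_right hq2v
    have hiv := hScon.intermediate_value hq1 hq2 (hcont.continuousOn)
    have h0 : (0:ℝ) ∈ Set.Icc (zx q1.1 q1.2) (zx q2.1 q2.2) := by
      rw [h1, h2]; constructor <;> norm_num
    obtain ⟨q, hqS, hq0⟩ := hiv h0
    have hq0' : zx q.1 q.2 = 0 := hq0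
    rcases hval q hqS with h | h <;> rw [hq0'] at h <;> norm_num at h
  refine ⟨fun t => z t 0, ?_⟩
  rcases hdico with hpos | hneg
  · left
    intro t ht x
    have hconst : ∀ y : ℝ, z t y - y = z t 0 - 0 := by
      intro y
      have hd : ∀ u : ℝ, HasDerivAt (fun w => z t w - w) 0 u := by
        intro u
        have := (hzx t u).sub (hasDerivAt_id u)
        have hzxu : zx t u = 1 := hpos (t, u) ⟨ht, trivial⟩
        rw [hzxu, sub_self] at this; exact this
      have := is_const_of_deriv_eq_zero (f := fun w => z t w - w)
        (fun u => (hd u).differentiableAt) (fun u => (hd u).deriv) y 0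
      simpa using this
    have := hconst x
    simp at this
    linarith
  · right
    intro t ht x
    have hconst : ∀ y : ℝ, z t y + y = z t 0 + 0 := by
      intro y
      have hd : ∀ u : ℝ, HasDerivAt (fun w => z t w + w) 0 u := by
        intro u
        have := (hzx t u).add (hasDerivAt_id u)
        have hzxu : zx t u = -1 := hneg (t, u) ⟨ht, trivial⟩
        rw [hzxu, neg_add_cancel] at this; exact this
      have := is_const_of_deriv_eq_zero (f := fun w => z t w + w)
        (fun u => (hd u).differentiableAt) (fun u => (hd u).deriv) y 0
      simpa using this
    have := hconst x
    simp at this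
    linarith
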